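/- (Lemma 6.5, first part) Suppose G carries an orientation such that K(v) > 0 for every v ∈ V. Then the isoperimetric constant at infinity satisfies α_ess(G) ≥ K^ess(G) := liminf_{v ∈ V} K(v). -/

import Mathlib

open scoped Classical ENNReal
open MeasureTheory

noncomputable section

/-- A real function on `[0, L]` which is continuous and piecewise continuously
differentiable: there is a finite partition `0 = x 0 < x 1 < ... < x n = L` such that
on each closed piece the function has a continuous derivative. -/
def PiecewiseC1 (f : ℝ → ℝ) (L : ℝ) : Prop :=
  ContinuousOn f (Set.Icc 0 L) ∧
  ∃ (n : ℕ) (x : Fin (n + 1) → ℝ), x 0 = 0 ∧ x (Fin.last n) = L ∧ StrictMono x ∧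
    ∀ i : Fin n, ∃ g : ℝ → ℝ,
      ContinuousOn g (Set.Icc (x i.castSucc) (x i.succ)) ∧
      ∀ t ∈ Set.Icc (x i.castSucc) (x i.succ),
        HasDerivWithinAt f (g t) (Set.Icc (x i.castSucc) (x i.succ)) t

/-- The underlying (unoriented) simple graph of a set of edges `E` with endpoint
map `ends : E → V × V`. -/
def graphOf {V E : Type} (ends : E → V × V) : SimpleGraph V :=
  SimpleGraph.fromRel fun u v => ∃ e, ends e = (u, v)

/-- A metric graph: a connected, locally finite, simple combinatorial graph with
countably infinite vertex and edge sets, each edge having a finite positive length.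
Each edge carries an (auxiliary) orientation given by `ends`. -/
structure MetricGraph : Type 1 where
  V : Type
  E : Type
  countV : Countable V
  infV : Infinite V
  countE : Countable E
  infE : Infinite E
  ends : E → V × V
  len : E → ℝ
  len_pos : ∀ e, 0 < len e
  no_loops : ∀ e, (ends e).1 ≠ (ends e).2
  no_multi : Function.Injective fun e => Sym2.mk (ends e)
  locfin : ∀ v, {e | (ends e).1 = v ∨ (ends e).2 = v}.Finite
  conn : (graphOf ends).Connected

namespace MetricGraph

/-- The underlying simple graph. -/
def graph (Γ : MetricGraph) : SimpleGraph Γ.V := graphOf Γ.ends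

/-- The star of a vertex: the set of edges incident to it. -/
def star (Γ : MetricGraph) (v : Γ.V) : Set Γ.E :=
  {e | (Γ.ends e).1 = v ∨ (Γ.ends e).2 = v}

/-- Combinatorial degree of a vertex. -/
def degree (Γ : MetricGraph) (v : Γ.V) : ℕ := (Γ.locfin v).toFinset.card

/-- The vertices of a (finite) subgraph given by a finite set of edges. -/
def vertsOf (Γ : MetricGraph) (F : Finset Γ.E) : Finset Γ.V :=
  F.image (fun e => (Γ.ends e).1) ∪ F.image fun e => (Γ.ends e).2

/-- The degree of a vertex inside the subgraph given by the edge set `F`. -/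
def degIn (Γ : MetricGraph) (F : Finset Γ.E) (v : Γ.V) : ℕ :=
  (F.filter fun e => (Γ.ends e).1 = v ∨ (Γ.ends e).2 = v).card

/-- Connectedness of the subgraph spanned by the edge set `F`. -/
def SubConn (Γ : MetricGraph) (F : Finset Γ.E) : Prop :=
  ((SimpleGraph.fromRel fun u v => ∃ e ∈ F, Γ.ends e = (u, v)).induce
    (↑(Γ.vertsOf F) : Set Γ.V)).Connected

/-- A finite connected subgraph (with at least one edge), given by its edge set. -/
def IsFinSubgraph (Γ : MetricGraph) (F : Finset Γ.E) : Prop :=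
  F.Nonempty ∧ Γ.SubConn F

/-- The boundary of a finite subgraph with respect to `Γ`: the vertices whose degree
in the subgraph is strictly smaller than the degree in `Γ`. -/
def bdry (Γ : MetricGraph) (F : Finset Γ.E) : Finset Γ.V :=
  (Γ.vertsOf F).filter fun v => Γ.degIn F v < Γ.degree v

/-- `deg (∂_G G̃)`. -/
def degBdry (Γ : MetricGraph) (F : Finset Γ.E) : ℝ :=
  ∑ v ∈ Γ.bdry F, (Γ.degIn F v : ℝ)

/-- The total length (Lebesgue measure) of a finite subgraph. -/
def mes (Γ : MetricGraph) (F : Finset Γ.E) : ℝ := ∑ e ∈ F, Γ.len e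

/-- The isoperimetric (Cheeger) constant of a metric graph. -/
def alpha (Γ : MetricGraph) : ℝ :=
  sInf {r : ℝ | ∃ F : Finset Γ.E, Γ.IsFinSubgraph F ∧ r = Γ.degBdry F / Γ.mes F}

/-- The isoperimetric constant at infinity, as an element of `[0,∞]`. -/
def alphaEssEnn (Γ : MetricGraph) : ℝ≥0∞ :=
  ⨆ W : Finset Γ.E, ⨅ (F : Finset Γ.E) (_ : Γ.IsFinSubgraph F ∧ Disjoint F W),
    ENNReal.ofReal (Γ.degBdry F / Γ.mes F)

/-- The vertex weight `m(v) = Σ_{e ∈ E_v} |e|`. -/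
def mweight (Γ : MetricGraph) (v : Γ.V) : ℝ :=
  ∑ e ∈ (Γ.locfin v).toFinset, Γ.len e

/-- The set of boundary edges of a vertex set: edges with exactly one endpoint in `X`. -/
def Eb (Γ : MetricGraph) (X : Set Γ.V) : Set Γ.E :=
  {e | Xor' ((Γ.ends e).1 ∈ X) ((Γ.ends e).2 ∈ X)}

/-- The discrete isoperimetric constant of a vertex set `U`. -/
def alphaD (Γ : MetricGraph) (U : Set Γ.V) : ℝ :=
  sInf {r : ℝ | ∃ X : Finset Γ.V, ↑X ⊆ U ∧ X.Nonempty ∧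
    r = ((Γ.Eb ↑X).ncard : ℝ) / ∑ v ∈ X, Γ.mweight v}

/-- The discrete isoperimetric constant at infinity, as an element of `[0,∞]`. -/
def alphaDEssEnn (Γ : MetricGraph) : ℝ≥0∞ :=
  ⨆ X : Finset Γ.V, ENNReal.ofReal (Γ.alphaD (↑X : Set Γ.V)ᶜ)

/-- The combinatorial isoperimetric constant. -/
def alphaComb (Γ : MetricGraph) : ℝ :=
  sInf {r : ℝ | ∃ X : Finset Γ.V, X.Nonempty ∧
    r = ((Γ.Eb ↑X).ncard : ℝ) / ∑ v ∈ X, (Γ.degree v : ℝ)}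

/-- `ℓ*(G) = sup of edge lengths`. -/
def ellSup (Γ : MetricGraph) : ℝ := sSup (Set.range Γ.len)

/-- `ℓ_*(G) = inf of edge lengths`. -/
def ellInf (Γ : MetricGraph) : ℝ := sInf (Set.range Γ.len)

/-- `ℓ*(G)` as an element of `[0,∞]`. -/
def ellSupEnn (Γ : MetricGraph) : ℝ≥0∞ := ⨆ e : Γ.E, ENNReal.ofReal (Γ.len e)

/-- `ℓ*_ess(G) = inf_F sup_{e ∉ F} |e|` as an element of `[0,∞]`. -/
def ellSupEssEnn (Γ : MetricGraph) : ℝ≥0∞ :=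
  ⨅ W : Finset Γ.E, ⨆ e : {e : Γ.E // e ∉ W}, ENNReal.ofReal (Γ.len (e : Γ.E))

/-- Outgoing edges at a vertex (for the fixed orientation). -/
def plusE (Γ : MetricGraph) (v : Γ.V) : Set Γ.E := {e | (Γ.ends e).1 = v}

/-- Incoming edges at a vertex (for the fixed orientation). -/
def minusE (Γ : MetricGraph) (v : Γ.V) : Set Γ.E := {e | (Γ.ends e).2 = v}

/-- The curvature `K(v) = ((#E_v⁺ − #E_v⁻)/#E_v⁺) · inf_{e ∈ E_v⁺} 1/|e|`. -/
def Kcurv (Γ : MetricGraph) (v : Γ.V) : ℝ :=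
  (((Γ.plusE v).ncard : ℝ) - ((Γ.minusE v).ncard : ℝ)) / ((Γ.plusE v).ncard : ℝ) *
    sInf ((fun e => 1 / Γ.len e) '' Γ.plusE v)

/-- The combinatorial curvature `K_comb(v) = 1 − #E_v⁻/#E_v⁺`. -/
def Kcomb (Γ : MetricGraph) (v : Γ.V) : ℝ :=
  1 - ((Γ.minusE v).ncard : ℝ) / ((Γ.plusE v).ncard : ℝ)

/-- `liminf_{v ∈ V} K(v) = sup over finite W of inf_{v ∉ W} K(v)`, in `[0,∞]`. -/
def KcurvEssEnn (Γ : MetricGraph) : ℝ≥0∞ :=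
  ⨆ W : Finset Γ.V, ⨅ v : {v : Γ.V // v ∉ W}, ENNReal.ofReal (Γ.Kcurv (v : Γ.V))

/-- `liminf_{v ∈ V} K_comb(v) = sup over finite W of inf_{v ∉ W} K_comb(v)`. -/
def KcombLiminf (Γ : MetricGraph) : ℝ :=
  sSup (Set.range fun W : Finset Γ.V => sInf (Γ.Kcomb '' (↑W : Set Γ.V)ᶜ))

/-- The value of an edgewise function at an endpoint of an edge. -/
def endVal (Γ : MetricGraph) (f : Γ.E → ℝ → ℝ) (e : Γ.E) (v : Γ.V) : ℝ :=
  if (Γ.ends e).1 = v then f e 0 else f e (Γ.len e)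

/-- A test function on the metric graph `Γ`: a family of continuous, piecewise `C¹`
functions on the edges, matching at the vertices, vanishing on all but finitely
many edges. -/
structure TestFun (Γ : MetricGraph) where
  f : Γ.E → ℝ → ℝ
  piecewise : ∀ e, PiecewiseC1 (f e) (Γ.len e)
  vertexCont : ∀ e e' : Γ.E, ∀ v : Γ.V, e ∈ Γ.star v → e' ∈ Γ.star v →
    Γ.endVal f e v = Γ.endVal f e' v
  finSupp : {e : Γ.E | ∃ x ∈ Set.Icc 0 (Γ.len e), f e x ≠ 0}.Finite

/-- `‖f‖² = Σ_e ∫₀^{|e|} f_e(x)² dx`. -/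
def TestFun.normSq {Γ : MetricGraph} (φ : TestFun Γ) : ℝ :=
  ∑ᶠ e : Γ.E, ∫ x in (0:ℝ)..Γ.len e, (φ.f e x) ^ 2

/-- `‖f′‖² = Σ_e ∫₀^{|e|} f_e′(x)² dx`. -/
def TestFun.energySq {Γ : MetricGraph} (φ : TestFun Γ) : ℝ :=
  ∑ᶠ e : Γ.E, ∫ x in (0:ℝ)..Γ.len e, (deriv (φ.f e) x) ^ 2

/-- A test function is nonzero if it does not vanish identically on the graph. -/
def TestFun.Nonzero {Γ : MetricGraph} (φ : TestFun Γ) : Prop :=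
  ∃ e : Γ.E, ∃ x ∈ Set.Icc 0 (Γ.len e), φ.f e x ≠ 0

/-- The bottom of the spectrum of the Kirchhoff Laplacian, via the variational
(Rayleigh quotient) characterization. -/
def lambda0 (Γ : MetricGraph) : ℝ :=
  sInf {r : ℝ | ∃ φ : TestFun Γ, φ.Nonzero ∧ r = φ.energySq / φ.normSq}

end MetricGraph

/-- A weighted graph `(V, m, b)`: a connected, locally finite, simple combinatorial
graph with countably infinite vertex and edge sets, an edge weight `b` and a vertex
weight `m`. -/
structure WeightedGraph : Type 1 where
  V : Type
  E : Type
  countV : Countable V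
  infV : Infinite V
  countE : Countable E
  infE : Infinite E
  ends : E → V × V
  no_loops : ∀ e, (ends e).1 ≠ (ends e).2
  no_multi : Function.Injective fun e => Sym2.mk (ends e)
  locfin : ∀ v, {e | (ends e).1 = v ∨ (ends e).2 = v}.Finite
  conn : (graphOf ends).Connected
  b : E → ℝ
  b_pos : ∀ e, 0 < b e
  m : V → ℝ
  m_pos : ∀ v, 0 < m v

namespace WeightedGraph

/-- An edge weight `d` is intrinsic if `Σ_{e ∈ E_v} d(e)² b(e) ≤ m(v)` for all `v`. -/
def Intrinsic (Γ : WeightedGraph) (d : Γ.E → ℝ) : Prop :=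
  ∀ v, ∑ e ∈ (Γ.locfin v).toFinset, d e ^ 2 * Γ.b e ≤ Γ.m v

/-- The boundary edges of a vertex set: edges with exactly one endpoint in `X`. -/
def Eb (Γ : WeightedGraph) (X : Set Γ.V) : Set Γ.E :=
  {e | Xor' ((Γ.ends e).1 ∈ X) ((Γ.ends e).2 ∈ X)}

/-- The discrete isoperimetric constant `α_d(U)` with respect to the weight `d`. -/
def alphaD (Γ : WeightedGraph) (d : Γ.E → ℝ) (U : Set Γ.V) : ℝ :=
  sInf {r : ℝ | ∃ X : Finset Γ.V, ↑X ⊆ U ∧ X.Nonempty ∧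
    r = (∑ᶠ e ∈ Γ.Eb ↑X, d e * Γ.b e) / ∑ v ∈ X, Γ.m v}

/-- The discrete isoperimetric constant at infinity, in `[0,∞]`. -/
def alphaDEssEnn (Γ : WeightedGraph) (d : Γ.E → ℝ) : ℝ≥0∞ :=
  ⨆ X : Finset Γ.V, ENNReal.ofReal (Γ.alphaD d (↑X : Set Γ.V)ᶜ)

/-- The energy form `Q(u) = Σ_e b(e) (u(e_i) − u(e_0))²`. -/
def Q (Γ : WeightedGraph) (u : Γ.V → ℝ) : ℝ :=
  ∑ᶠ e : Γ.E, Γ.b e * (u (Γ.ends e).2 - u (Γ.ends e).1) ^ 2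

/-- The squared norm `Σ_v m(v) u(v)²`. -/
def normSqD (Γ : WeightedGraph) (u : Γ.V → ℝ) : ℝ :=
  ∑ᶠ v : Γ.V, Γ.m v * u v ^ 2

/-- The bottom of the spectrum of the Friedrichs extension of the weighted Laplacian,
via the variational characterization over finitely supported functions. -/
def lambda0 (Γ : WeightedGraph) : ℝ :=
  sInf {r : ℝ | ∃ u : Γ.V → ℝ, (Function.support u).Finite ∧ u ≠ 0 ∧
    r = Γ.Q u / Γ.normSqD u}

/-- The bottom of the essential spectrum of the Friedrichs extension, via Glazman's
decomposition principle, in `[0,∞]`. -/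
def lambda0EssEnn (Γ : WeightedGraph) : ℝ≥0∞ :=
  ⨆ X : Finset Γ.V, ⨅ (u : Γ.V → ℝ)
    (_ : (Function.support u).Finite ∧ u ≠ 0 ∧ ∀ v ∈ X, u v = 0),
      ENNReal.ofReal (Γ.Q u / Γ.normSqD u)

end WeightedGraph

end

namespace MetricGraphAux

open MetricGraph

variable (Γ : MetricGraph)

lemma plus_finite (v : Γ.V) : (Γ.plusE v).Finite :=
  (Γ.locfin v).subset fun e he => Or.inl he

lemma minus_finite (v : Γ.V) : (Γ.minusE v).Finite :=
  (Γ.locfin v).subset fun e he => Or.inr he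

lemma cinf_pos (v : Γ.V) (hne : (Γ.plusE v).Nonempty) :
    0 < sInf ((fun e => 1 / Γ.len e) '' Γ.plusE v) := by
  have hfin : ((fun e => 1 / Γ.len e) '' Γ.plusE v).Finite :=
    (plus_finite Γ v).image _
  obtain ⟨e, -, he⟩ := (hne.image _).csInf_mem hfin
  rw [← he]
  have := Γ.len_pos e
  positivity

lemma cinf_mul_len_le (v : Γ.V) (e : Γ.E) (he : e ∈ Γ.plusE v) :
    sInf ((fun e => 1 / Γ.len e) '' Γ.plusE v) * Γ.len e ≤ 1 := by
  have hbdd : BddBelow ((fun e => 1 / Γ.len e) '' Γ.plusE v) :=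
    ((plus_finite Γ v).image _).bddBelow
  have h1 : sInf ((fun e => 1 / Γ.len e) '' Γ.plusE v) ≤ 1 / Γ.len e :=
    csInf_le hbdd ⟨e, he, rfl⟩
  have hl := Γ.len_pos e
  calc sInf ((fun e => 1 / Γ.len e) '' Γ.plusE v) * Γ.len e
      ≤ (1 / Γ.len e) * Γ.len e := by nlinarith
    _ = 1 := by field_simp

lemma ratio_pos (v : Γ.V) (hne : (Γ.plusE v).Nonempty) (hK : 0 < Γ.Kcurv v) :
    0 < (((Γ.plusE v).ncard : ℝ) - ((Γ.minusE v).ncard : ℝ)) / ((Γ.plusE v).ncard : ℝ) := by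
  have hc := cinf_pos Γ v hne
  have hK' : 0 < (((Γ.plusE v).ncard : ℝ) - ((Γ.minusE v).ncard : ℝ)) / ((Γ.plusE v).ncard : ℝ)
      * sInf ((fun e => 1 / Γ.len e) '' Γ.plusE v) := hK
  nlinarith

lemma Kcurv_mul_len_le (v : Γ.V) (hne : (Γ.plusE v).Nonempty) (hK : 0 < Γ.Kcurv v)
    (e : Γ.E) (he : e ∈ Γ.plusE v) :
    Γ.Kcurv v * Γ.len e ≤
      (((Γ.plusE v).ncard : ℝ) - ((Γ.minusE v).ncard : ℝ)) / ((Γ.plusE v).ncard : ℝ) := by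
  have h1 := cinf_mul_len_le Γ v e he
  have h2 := ratio_pos Γ v hne hK
  have : Γ.Kcurv v * Γ.len e =
      (((Γ.plusE v).ncard : ℝ) - ((Γ.minusE v).ncard : ℝ)) / ((Γ.plusE v).ncard : ℝ)
        * (sInf ((fun e => 1 / Γ.len e) '' Γ.plusE v) * Γ.len e) := by
    rw [MetricGraph.Kcurv, mul_assoc]
  rw [this]
  nlinarith

lemma key (h : ∀ v : Γ.V, (Γ.plusE v).Nonempty ∧ 0 < Γ.Kcurv v)
    (F : Finset Γ.E) (k : ℝ) (hk : ∀ v ∈ Γ.vertsOf F, k ≤ Γ.Kcurv v) :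
    k * Γ.mes F ≤ Γ.degBdry F := by
  classical
  set Vt := Γ.vertsOf F with hVt
  have htail : ∀ e ∈ F, (Γ.ends e).1 ∈ Vt := fun e he =>
    Finset.mem_union_left _ (Finset.mem_image_of_mem _ he)
  have hhead : ∀ e ∈ F, (Γ.ends e).2 ∈ Vt := fun e he =>
    Finset.mem_union_right _ (Finset.mem_image_of_mem _ he)
  set aF : Γ.V → Finset Γ.E := fun v => F.filter fun e => (Γ.ends e).1 = v with haF
  set bF : Γ.V → Finset Γ.E := fun v => F.filter fun e => (Γ.ends e).2 = v with hbF
  set A : Γ.V → ℝ := fun v => ((Γ.plusE v).ncard : ℝ) with hAdef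
  set B : Γ.V → ℝ := fun v => ((Γ.minusE v).ncard : ℝ) with hBdef
  set ratio : Γ.V → ℝ := fun v => (A v - B v) / A v with hratiodef
  have hApos : ∀ v, 0 < A v := by
    intro v
    have h0 : 0 < (Γ.plusE v).ncard := (Set.ncard_pos (plus_finite Γ v)).2 (h v).1
    simp only [hAdef]
    exact_mod_cast h0
  -- Step 1
  have step1 : k * Γ.mes F ≤ ∑ v ∈ Vt, ((aF v).card : ℝ) * ratio v := by
    have hmes : Γ.mes F = ∑ v ∈ Vt, ∑ e ∈ aF v, Γ.len e :=
      (Finset.sum_fiberwise_of_maps_to htail _).symm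
    rw [hmes, Finset.mul_sum]
    refine Finset.sum_le_sum fun v hv => ?_
    have hpt : ∀ e ∈ aF v, k * Γ.len e ≤ ratio v := by
      intro e he
      have he' : e ∈ Γ.plusE v := (Finset.mem_filter.1 he).2
      calc k * Γ.len e ≤ Γ.Kcurv v * Γ.len e :=
            mul_le_mul_of_nonneg_right (hk v hv) (le_of_lt (Γ.len_pos e))
        _ ≤ ratio v := Kcurv_mul_len_le Γ v (h v).1 (h v).2 e he'
    calc k * ∑ e ∈ aF v, Γ.len e = ∑ e ∈ aF v, k * Γ.len e := Finset.mul_sum _ _ _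
      _ ≤ ∑ _e ∈ aF v, ratio v := Finset.sum_le_sum hpt
      _ = ((aF v).card : ℝ) * ratio v := by rw [Finset.sum_const, nsmul_eq_mul]
  -- Step 2
  have hsplit : ∀ v, ((aF v).card : ℝ) * ratio v
      = ((aF v).card : ℝ) - ((aF v).card : ℝ) * B v / A v := by
    intro v
    have hA := (hApos v).ne'
    simp only [hratiodef]
    rw [mul_div_assoc', mul_sub, sub_div, mul_div_cancel_right₀ _ hA]
  have hcount_a : ∑ v ∈ Vt, ((aF v).card : ℝ) = (F.card : ℝ) := by
    rw [show (F.card : ℝ) = ((∑ v ∈ Vt, (aF v).card : ℕ) : ℝ) by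
      rw [← Finset.card_eq_sum_card_fiberwise htail]]
    push_cast
    rfl
  have hcount_b : ∑ v ∈ Vt, ((bF v).card : ℝ) = (F.card : ℝ) := by
    rw [show (F.card : ℝ) = ((∑ v ∈ Vt, (bF v).card : ℕ) : ℝ) by
      rw [← Finset.card_eq_sum_card_fiberwise hhead]]
    push_cast
    rfl
  have step2 : ∑ v ∈ Vt, ((aF v).card : ℝ) * ratio v
      = ∑ v ∈ Vt, (((bF v).card : ℝ) - ((aF v).card : ℝ) * B v / A v) := by
    rw [Finset.sum_congr rfl fun v _ => hsplit v, Finset.sum_sub_distrib,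
      Finset.sum_sub_distrib, hcount_a, hcount_b]
  -- Step 3: pointwise bound by boundary degrees
  have step3 : ∑ v ∈ Vt, (((bF v).card : ℝ) - ((aF v).card : ℝ) * B v / A v)
      ≤ ∑ v ∈ Vt, (if Γ.degIn F v < Γ.degree v then (Γ.degIn F v : ℝ) else 0) := by
    refine Finset.sum_le_sum fun v hv => ?_
    by_cases hb : Γ.degIn F v < Γ.degree v
    · rw [if_pos hb]
      have h1 : (bF v).card ≤ Γ.degIn F v := by
        apply Finset.card_le_card
        apply Finset.monotone_filter_right
        intro e he
        exact fun he' => Or.inr he'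
      have h2 : 0 ≤ ((aF v).card : ℝ) * B v / A v := by
        have := hApos v
        have hB : (0:ℝ) ≤ B v := Nat.cast_nonneg _
        positivity
      have h1' : ((bF v).card : ℝ) ≤ (Γ.degIn F v : ℝ) := by exact_mod_cast h1
      linarith
    · rw [if_neg hb]
      -- interior vertex: the full star is contained in F
      have hsub : (F.filter fun e => (Γ.ends e).1 = v ∨ (Γ.ends e).2 = v)
          ⊆ (Γ.locfin v).toFinset := by
        intro e he
        rw [Set.Finite.mem_toFinset]
        exact (Finset.mem_filter.1 he).2
      have hle : Γ.degree v ≤ Γ.degIn F v := not_lt.1 hb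
      have heq : (F.filter fun e => (Γ.ends e).1 = v ∨ (Γ.ends e).2 = v)
          = (Γ.locfin v).toFinset :=
        Finset.eq_of_subset_of_card_le hsub hle
      have hstar : ∀ e : Γ.E, ((Γ.ends e).1 = v ∨ (Γ.ends e).2 = v) → e ∈ F := by
        intro e he
        have : e ∈ (Γ.locfin v).toFinset := by
          rw [Set.Finite.mem_toFinset]; exact he
        rw [← heq] at this
        exact (Finset.mem_filter.1 this).1
      have haeq : (aF v) = (plus_finite Γ v).toFinset := by
        ext e
        simp only [haF, Finset.mem_filter, Set.Finite.mem_toFinset]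
        constructor
        · rintro ⟨-, h2⟩; exact h2
        · intro h2; exact ⟨hstar e (Or.inl h2), h2⟩
      have hbeq : (bF v) = (minus_finite Γ v).toFinset := by
        ext e
        simp only [hbF, Finset.mem_filter, Set.Finite.mem_toFinset]
        constructor
        · rintro ⟨-, h2⟩; exact h2
        · intro h2; exact ⟨hstar e (Or.inr h2), h2⟩
      have hacard : ((aF v).card : ℝ) = A v := by
        have hnc := Set.ncard_eq_toFinset_card _ (plus_finite Γ v)
        simp only [haeq, hAdef, hnc]
      have hbcard : ((bF v).card : ℝ) = B v := by
        have hnc := Set.ncard_eq_toFinset_card _ (minus_finite Γ v)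
        simp only [hbeq, hBdef, hnc]
      rw [hacard, hbcard]
      have hA := (hApos v).ne'
      field_simp
      simp
  -- assemble
  have hfinal : ∑ v ∈ Vt, (if Γ.degIn F v < Γ.degree v then (Γ.degIn F v : ℝ) else 0)
      = Γ.degBdry F := by
    rw [MetricGraph.degBdry, MetricGraph.bdry, Finset.sum_filter]
  linarith [step1, step2 ▸ step1, step3, hfinal ▸ step3]

end MetricGraphAux

/-- **Lemma 6.5 (first part).** If `K(v) > 0` for every vertex `v`
(in particular `E_v⁺ ≠ ∅`), then `α_ess(G) ≥ K^ess(G) = liminf_{v ∈ V} K(v)`. -/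
theorem alphaEss_ge_liminf_curvature (Γ : MetricGraph)
    (h : ∀ v : Γ.V, (Γ.plusE v).Nonempty ∧ 0 < Γ.Kcurv v) :
    Γ.KcurvEssEnn ≤ Γ.alphaEssEnn := by
  classical
  rw [MetricGraph.KcurvEssEnn, MetricGraph.alphaEssEnn]
  refine iSup_le fun W => ?_
  refine le_iSup_of_le (W.biUnion fun v => (Γ.locfin v).toFinset) ?_
  refine le_iInf fun F => le_iInf fun hF => ?_
  obtain ⟨⟨hFne, -⟩, hdisj⟩ := hF
  have havoid : ∀ v ∈ Γ.vertsOf F, v ∉ W := by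
    intro v hv hvW
    rcases Finset.mem_union.1 hv with hv' | hv' <;>
    · obtain ⟨e, he, hend⟩ := Finset.mem_image.1 hv'
      have hloc : e ∈ (Γ.locfin v).toFinset := by
        rw [Set.Finite.mem_toFinset]
        first
          | exact Or.inl hend
          | exact Or.inr hend
      exact Finset.disjoint_left.1 hdisj he (Finset.mem_biUnion.2 ⟨v, hvW, hloc⟩)
  have hVtne : (Γ.vertsOf F).Nonempty := by
    obtain ⟨e, he⟩ := hFne
    exact ⟨(Γ.ends e).1, Finset.mem_union_left _ (Finset.mem_image_of_mem _ he)⟩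
  obtain ⟨v₀, hv₀, hmin⟩ := (Γ.vertsOf F).exists_min_image Γ.Kcurv hVtne
  refine le_trans (iInf_le _ ⟨v₀, havoid v₀ hv₀⟩) ?_
  refine ENNReal.ofReal_le_ofReal ?_
  have hmes : 0 < Γ.mes F := Finset.sum_pos (fun e _ => Γ.len_pos e) hFne
  rw [le_div_iff₀ hmes]
  exact MetricGraphAux.key Γ h F (Γ.Kcurv v₀) hmin
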